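/- In ℂ[S₃] define e_s = (1/2)(id + (1 2)), e_a = (1/2)(id − (1 2)), f_s = (1/6)·Σ_{p∈S₃} p, f_a = (1/6)·Σ_{p∈S₃} sign(p)·p, and the idempotents h_s = e_s − f_s and h_a = e_a − f_a. Then: (1) η·h_s ≠ h_s and η·h_a ≠ h_a; (2) for ν ∈ ℂ, ξ_ν·h_s = h_s if and only if ν = 0; (3) for ν ∈ ℂ, ξ_ν·h_a = h_a if and only if ν = 2; consequently (4) ξ₀·ℂ[S₃] = h_s·ℂ[S₃] and ξ₂·ℂ[S₃] = h_a·ℂ[S₃]. -/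

import Mathlib

/-- The idempotent `ξ_ν = (1/3)(id + ν(2 3) + (1−ν)(1 2) − ν·c + (ν−1)·c² − (1 3))` of
`ℂ[S₃]`, where `c` is the 3-cycle `1↦2↦3↦1` (0-based: `finRotate 3`). -/
noncomputable def xi (ν : ℂ) : MonoidAlgebra ℂ (Equiv.Perm (Fin 3)) :=
  (3⁻¹ : ℂ) • (MonoidAlgebra.single 1 1
    + ν • MonoidAlgebra.single (Equiv.swap (1 : Fin 3) 2) 1
    + (1 - ν) • MonoidAlgebra.single (Equiv.swap (0 : Fin 3) 1) 1
    - ν • MonoidAlgebra.single (finRotate 3) 1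
    + (ν - 1) • MonoidAlgebra.single (finRotate 3 * finRotate 3) 1
    - MonoidAlgebra.single (Equiv.swap (0 : Fin 3) 2) 1)

/-- The idempotent `η = (1/3)(id − (1 2) − c + (1 3))` of `ℂ[S₃]`. -/
noncomputable def eta : MonoidAlgebra ℂ (Equiv.Perm (Fin 3)) :=
  (3⁻¹ : ℂ) • (MonoidAlgebra.single 1 1
    - MonoidAlgebra.single (Equiv.swap (0 : Fin 3) 1) 1
    - MonoidAlgebra.single (finRotate 3) 1
    + MonoidAlgebra.single (Equiv.swap (0 : Fin 3) 2) 1)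

/-- `e_s = (1/2)(id + (1 2))` (0-based: `(1 2)` is `swap 0 1`). -/
noncomputable def eS : MonoidAlgebra ℂ (Equiv.Perm (Fin 3)) :=
  (2⁻¹ : ℂ) • (MonoidAlgebra.single 1 1 + MonoidAlgebra.single (Equiv.swap (0 : Fin 3) 1) 1)

/-- `e_a = (1/2)(id − (1 2))`. -/
noncomputable def eA : MonoidAlgebra ℂ (Equiv.Perm (Fin 3)) :=
  (2⁻¹ : ℂ) • (MonoidAlgebra.single 1 1 - MonoidAlgebra.single (Equiv.swap (0 : Fin 3) 1) 1)

/-- `f_s = (1/6)·Σ_{p∈S₃} p`. -/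
noncomputable def fS : MonoidAlgebra ℂ (Equiv.Perm (Fin 3)) :=
  (6⁻¹ : ℂ) • ∑ p : Equiv.Perm (Fin 3), MonoidAlgebra.single p 1

/-- `f_a = (1/6)·Σ_{p∈S₃} sign(p)·p`. -/
noncomputable def fA : MonoidAlgebra ℂ (Equiv.Perm (Fin 3)) :=
  (6⁻¹ : ℂ) • ∑ p : Equiv.Perm (Fin 3),
    MonoidAlgebra.single p (((Equiv.Perm.sign p : ℤ) : ℂ))

/-- `h_s = e_s − f_s`. -/
noncomputable def hS : MonoidAlgebra ℂ (Equiv.Perm (Fin 3)) := eS - fS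

/-- `h_a = e_a − f_a`. -/
noncomputable def hA : MonoidAlgebra ℂ (Equiv.Perm (Fin 3)) := eA - fA

local notation "B1" => MonoidAlgebra.single (1 : Equiv.Perm (Fin 3)) (1:ℂ)
local notation "B01" => MonoidAlgebra.single (Equiv.swap (0:Fin 3) 1) (1:ℂ)
local notation "B12" => MonoidAlgebra.single (Equiv.swap (1:Fin 3) 2) (1:ℂ)
local notation "B02" => MonoidAlgebra.single (Equiv.swap (0:Fin 3) 2) (1:ℂ)
local notation "BC" => MonoidAlgebra.single (finRotate 3) (1:ℂ)
local notation "BC2" => MonoidAlgebra.single (finRotate 3 * finRotate 3) (1:ℂ)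

private lemma pm0 : (Equiv.swap (0:Fin 3) 1) * (Equiv.swap (0:Fin 3) 1) = (1 : Equiv.Perm (Fin 3)) := by decide
private lemma pm1 : (Equiv.swap (0:Fin 3) 1) * (Equiv.swap (1:Fin 3) 2) = finRotate 3 := by decide
private lemma pm2 : (Equiv.swap (0:Fin 3) 1) * (Equiv.swap (0:Fin 3) 2) = finRotate 3 * finRotate 3 := by decide
private lemma pm3 : (Equiv.swap (0:Fin 3) 1) * (finRotate 3) = Equiv.swap (1:Fin 3) 2 := by decide
private lemma pm4 : (Equiv.swap (0:Fin 3) 1) * (finRotate 3 * finRotate 3) = Equiv.swap (0:Fin 3) 2 := by decide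
private lemma pm5 : (Equiv.swap (1:Fin 3) 2) * (Equiv.swap (0:Fin 3) 1) = finRotate 3 * finRotate 3 := by decide
private lemma pm6 : (Equiv.swap (1:Fin 3) 2) * (Equiv.swap (1:Fin 3) 2) = (1 : Equiv.Perm (Fin 3)) := by decide
private lemma pm7 : (Equiv.swap (1:Fin 3) 2) * (Equiv.swap (0:Fin 3) 2) = finRotate 3 := by decide
private lemma pm8 : (Equiv.swap (1:Fin 3) 2) * (finRotate 3) = Equiv.swap (0:Fin 3) 2 := by decide
private lemma pm9 : (Equiv.swap (1:Fin 3) 2) * (finRotate 3 * finRotate 3) = Equiv.swap (0:Fin 3) 1 := by decide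
private lemma pm10 : (Equiv.swap (0:Fin 3) 2) * (Equiv.swap (0:Fin 3) 1) = finRotate 3 := by decide
private lemma pm11 : (Equiv.swap (0:Fin 3) 2) * (Equiv.swap (1:Fin 3) 2) = finRotate 3 * finRotate 3 := by decide
private lemma pm12 : (Equiv.swap (0:Fin 3) 2) * (Equiv.swap (0:Fin 3) 2) = (1 : Equiv.Perm (Fin 3)) := by decide
private lemma pm13 : (Equiv.swap (0:Fin 3) 2) * (finRotate 3) = Equiv.swap (0:Fin 3) 1 := by decide
private lemma pm14 : (Equiv.swap (0:Fin 3) 2) * (finRotate 3 * finRotate 3) = Equiv.swap (1:Fin 3) 2 := by decide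
private lemma pm15 : (finRotate 3) * (Equiv.swap (0:Fin 3) 1) = Equiv.swap (0:Fin 3) 2 := by decide
private lemma pm16 : (finRotate 3) * (Equiv.swap (1:Fin 3) 2) = Equiv.swap (0:Fin 3) 1 := by decide
private lemma pm17 : (finRotate 3) * (Equiv.swap (0:Fin 3) 2) = Equiv.swap (1:Fin 3) 2 := by decide
private lemma pm18 : (finRotate 3) * (finRotate 3 * finRotate 3) = (1 : Equiv.Perm (Fin 3)) := by decide
private lemma pm19 : (finRotate 3 * finRotate 3) * (Equiv.swap (0:Fin 3) 1) = Equiv.swap (1:Fin 3) 2 := by decide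
private lemma pm20 : (finRotate 3 * finRotate 3) * (Equiv.swap (1:Fin 3) 2) = Equiv.swap (0:Fin 3) 2 := by decide
private lemma pm21 : (finRotate 3 * finRotate 3) * (Equiv.swap (0:Fin 3) 2) = Equiv.swap (0:Fin 3) 1 := by decide
private lemma pm22 : (finRotate 3 * finRotate 3) * (finRotate 3) = (1 : Equiv.Perm (Fin 3)) := by decide
private lemma pm23 : (finRotate 3 * finRotate 3) * (finRotate 3 * finRotate 3) = finRotate 3 := by decide

private lemma univ_eq : (Finset.univ : Finset (Equiv.Perm (Fin 3))) =
    {1, Equiv.swap (0:Fin 3) 1, Equiv.swap (1:Fin 3) 2, Equiv.swap (0:Fin 3) 2,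
     finRotate 3, finRotate 3 * finRotate 3} := by decide

private lemma fS_eq : fS = (6⁻¹:ℂ) • (B1 + B01 + B12 + B02 + BC + BC2) := by
  rw [fS, univ_eq]
  rw [Finset.sum_insert (by decide), Finset.sum_insert (by decide), Finset.sum_insert (by decide),
      Finset.sum_insert (by decide), Finset.sum_insert (by decide), Finset.sum_singleton]
  module

private lemma fA_eq : fA = (6⁻¹:ℂ) • (B1 - B01 - B12 - B02 + BC + BC2) := by
  rw [fA, univ_eq]
  rw [Finset.sum_insert (by decide), Finset.sum_insert (by decide), Finset.sum_insert (by decide),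
      Finset.sum_insert (by decide), Finset.sum_insert (by decide), Finset.sum_singleton]
  simp only [show Equiv.Perm.sign (1 : Equiv.Perm (Fin 3)) = 1 from by decide,
    show Equiv.Perm.sign (Equiv.swap (0:Fin 3) 1) = -1 from by decide,
    show Equiv.Perm.sign (Equiv.swap (1:Fin 3) 2) = -1 from by decide,
    show Equiv.Perm.sign (Equiv.swap (0:Fin 3) 2) = -1 from by decide,
    show Equiv.Perm.sign (finRotate 3) = 1 from by decide,
    show Equiv.Perm.sign (finRotate 3 * finRotate 3) = 1 from by decide,
    Units.val_one, Units.val_neg, Int.cast_one, Int.cast_neg, MonoidAlgebra.single_neg]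
  module

private lemma hS_eq : hS = (6⁻¹:ℂ) • ((2:ℂ)•B1 + (2:ℂ)•B01 - B12 - B02 - BC - BC2) := by
  rw [hS, eS, fS_eq]; module

private lemma hA_eq : hA = (6⁻¹:ℂ) • ((2:ℂ)•B1 - (2:ℂ)•B01 + B12 + B02 - BC - BC2) := by
  rw [hA, eA, fA_eq]; module

private lemma eta_hS : eta * hS = 0 := by
  rw [eta, hS_eq]
  simp only [smul_mul_assoc, mul_smul_comm, add_mul, mul_add, sub_mul, mul_sub,
    MonoidAlgebra.single_mul_single, one_mul, mul_one,
    pm0, pm1, pm2, pm3, pm4, pm5, pm6, pm7, pm8, pm9, pm10, pm11, pm12, pm13, pm14,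
    pm15, pm16, pm17, pm18, pm19, pm20, pm21, pm22, pm23]
  module

private lemma eta_hA : eta * hA = hA + (6⁻¹:ℂ) • (B02 + BC2 - B12 - BC) := by
  rw [eta, hA_eq]
  simp only [smul_mul_assoc, mul_smul_comm, add_mul, mul_add, sub_mul, mul_sub,
    MonoidAlgebra.single_mul_single, one_mul, mul_one,
    pm0, pm1, pm2, pm3, pm4, pm5, pm6, pm7, pm8, pm9, pm10, pm11, pm12, pm13, pm14,
    pm15, pm16, pm17, pm18, pm19, pm20, pm21, pm22, pm23]
  module

private lemma xi_hS (ν : ℂ) : xi ν * hS =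
    hS + ν • ((6⁻¹:ℂ) • ((2:ℂ)•B12 + (2:ℂ)•BC2 - B1 - B01 - B02 - BC)) := by
  rw [xi, hS_eq]
  simp only [smul_mul_assoc, mul_smul_comm, add_mul, mul_add, sub_mul, mul_sub,
    MonoidAlgebra.single_mul_single, one_mul, mul_one,
    pm0, pm1, pm2, pm3, pm4, pm5, pm6, pm7, pm8, pm9, pm10, pm11, pm12, pm13, pm14,
    pm15, pm16, pm17, pm18, pm19, pm20, pm21, pm22, pm23]
  module

private lemma xi_hA (ν : ℂ) : xi ν * hA =
    hA + (ν - 2) • ((6⁻¹:ℂ) • (B1 + B02 - B01 - BC)) := by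
  rw [xi, hA_eq]
  simp only [smul_mul_assoc, mul_smul_comm, add_mul, mul_add, sub_mul, mul_sub,
    MonoidAlgebra.single_mul_single, one_mul, mul_one,
    pm0, pm1, pm2, pm3, pm4, pm5, pm6, pm7, pm8, pm9, pm10, pm11, pm12, pm13, pm14,
    pm15, pm16, pm17, pm18, pm19, pm20, pm21, pm22, pm23]
  module

private lemma hS_xi0 : hS * xi 0 = xi 0 := by
  rw [hS_eq, xi]
  simp only [smul_mul_assoc, mul_smul_comm, add_mul, mul_add, sub_mul, mul_sub,
    MonoidAlgebra.single_mul_single, one_mul, mul_one,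
    pm0, pm1, pm2, pm3, pm4, pm5, pm6, pm7, pm8, pm9, pm10, pm11, pm12, pm13, pm14,
    pm15, pm16, pm17, pm18, pm19, pm20, pm21, pm22, pm23]
  module

private lemma hA_xi2 : hA * xi 2 = xi 2 := by
  rw [hA_eq, xi]
  simp only [smul_mul_assoc, mul_smul_comm, add_mul, mul_add, sub_mul, mul_sub,
    MonoidAlgebra.single_mul_single, one_mul, mul_one,
    pm0, pm1, pm2, pm3, pm4, pm5, pm6, pm7, pm8, pm9, pm10, pm11, pm12, pm13, pm14,
    pm15, pm16, pm17, pm18, pm19, pm20, pm21, pm22, pm23]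
  module

private lemma hS_ne : hS ≠ 0 := by
  rw [hS_eq]
  intro h
  have h' : (6⁻¹:ℂ) • ((2:ℂ)•Finsupp.single (1 : Equiv.Perm (Fin 3)) (1:ℂ)
      + (2:ℂ)•Finsupp.single (Equiv.swap (0:Fin 3) 1) (1:ℂ)
      - Finsupp.single (Equiv.swap (1:Fin 3) 2) (1:ℂ)
      - Finsupp.single (Equiv.swap (0:Fin 3) 2) (1:ℂ)
      - Finsupp.single (finRotate 3) (1:ℂ)
      - Finsupp.single (finRotate 3 * finRotate 3) (1:ℂ)) = (0 : Equiv.Perm (Fin 3) →₀ ℂ) := congrArg MonoidAlgebra.coeff h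
  have := congrArg (fun f => f (1 : Equiv.Perm (Fin 3))) h'
  simp (config := { decide := true }) [Finsupp.single_apply] at this

private lemma E_ne : (6⁻¹:ℂ) • (B02 + BC2 - B12 - BC) ≠ 0 := by
  intro h
  have h' : (6⁻¹:ℂ) • (Finsupp.single (Equiv.swap (0:Fin 3) 2) (1:ℂ)
      + Finsupp.single (finRotate 3 * finRotate 3) (1:ℂ)
      - Finsupp.single (Equiv.swap (1:Fin 3) 2) (1:ℂ)
      - Finsupp.single (finRotate 3) (1:ℂ)) = (0 : Equiv.Perm (Fin 3) →₀ ℂ) := congrArg MonoidAlgebra.coeff h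
  have := congrArg (fun f => f (Equiv.swap (0:Fin 3) 2)) h'
  simp (config := { decide := true }) [Finsupp.single_apply] at this

private lemma W_ne : (6⁻¹:ℂ) • ((2:ℂ)•B12 + (2:ℂ)•BC2 - B1 - B01 - B02 - BC) ≠ 0 := by
  intro h
  have h' : (6⁻¹:ℂ) • ((2:ℂ)•Finsupp.single (Equiv.swap (1:Fin 3) 2) (1:ℂ)
      + (2:ℂ)•Finsupp.single (finRotate 3 * finRotate 3) (1:ℂ)
      - Finsupp.single (1 : Equiv.Perm (Fin 3)) (1:ℂ)
      - Finsupp.single (Equiv.swap (0:Fin 3) 1) (1:ℂ)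
      - Finsupp.single (Equiv.swap (0:Fin 3) 2) (1:ℂ)
      - Finsupp.single (finRotate 3) (1:ℂ)) = (0 : Equiv.Perm (Fin 3) →₀ ℂ) := congrArg MonoidAlgebra.coeff h
  have := congrArg (fun f => f (Equiv.swap (1:Fin 3) 2)) h'
  simp (config := { decide := true }) [Finsupp.single_apply] at this

private lemma V_ne : (6⁻¹:ℂ) • (B1 + B02 - B01 - BC) ≠ 0 := by
  intro h
  have h' : (6⁻¹:ℂ) • (Finsupp.single (1 : Equiv.Perm (Fin 3)) (1:ℂ)
      + Finsupp.single (Equiv.swap (0:Fin 3) 2) (1:ℂ)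
      - Finsupp.single (Equiv.swap (0:Fin 3) 1) (1:ℂ)
      - Finsupp.single (finRotate 3) (1:ℂ)) = (0 : Equiv.Perm (Fin 3) →₀ ℂ) := congrArg MonoidAlgebra.coeff h
  have := congrArg (fun f => f (1 : Equiv.Perm (Fin 3))) h'
  simp (config := { decide := true }) [Finsupp.single_apply] at this

private lemma xi0_hS : xi 0 * hS = hS := by rw [xi_hS]; simp

private lemma xi2_hA : xi 2 * hA = hA := by rw [xi_hA]; simp

/-- Relations of `η`, `ξ_ν` with the idempotents `h_s`, `h_a`, and the consequent right
ideal identities `ξ₀·ℂ[S₃] = h_s·ℂ[S₃]` and `ξ₂·ℂ[S₃] = h_a·ℂ[S₃]`. -/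
theorem stmt19 :
    (eta * hS ≠ hS ∧ eta * hA ≠ hA) ∧
    (∀ ν : ℂ, xi ν * hS = hS ↔ ν = 0) ∧
    (∀ ν : ℂ, xi ν * hA = hA ↔ ν = 2) ∧
    Set.range (fun x => xi 0 * x) = Set.range (fun x => hS * x) ∧
    Set.range (fun x => xi 2 * x) = Set.range (fun x => hA * x) := by
  refine ⟨⟨?_, ?_⟩, ?_, ?_, ?_, ?_⟩
  · rw [eta_hS]; exact fun h => hS_ne h.symm
  · rw [eta_hA]; intro h; exact E_ne (add_eq_left.mp h)
  · intro ν
    constructor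
    · intro h
      rw [xi_hS] at h
      rcases smul_eq_zero.mp (add_eq_left.mp h) with h0 | h0
      · exact h0
      · exact absurd h0 W_ne
    · rintro rfl; exact xi0_hS
  · intro ν
    constructor
    · intro h
      rw [xi_hA] at h
      rcases smul_eq_zero.mp (add_eq_left.mp h) with h0 | h0
      · exact sub_eq_zero.mp h0
      · exact absurd h0 V_ne
    · rintro rfl; exact xi2_hA
  · ext y
    simp only [Set.mem_range]
    constructor
    · rintro ⟨x, rfl⟩; exact ⟨xi 0 * x, by rw [← mul_assoc, hS_xi0]⟩
    · rintro ⟨x, rfl⟩; exact ⟨hS * x, by rw [← mul_assoc, xi0_hS]⟩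
  · ext y
    simp only [Set.mem_range]
    constructor
    · rintro ⟨x, rfl⟩; exact ⟨xi 2 * x, by rw [← mul_assoc, hA_xi2]⟩
    · rintro ⟨x, rfl⟩; exact ⟨hA * x, by rw [← mul_assoc, xi2_hA]⟩
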